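/- Let P ⊆ ℝ^n be an n-dimensional lattice polytope and let z ∈ pos(P × {1}) ∩ ℤ^{n+1}, where pos(P × {1}) is the cone generated by P × {1}. Then there exist (not necessarily distinct) vertices v_1,…,v_g of P (possibly g = 0), an integer j ≥ 0 and a lattice point p ∈ (jP) ∩ ℤ^n such that z = (v_1,1) + ⋯ + (v_g,1) + (p,j), where either (p,j) = (0,0) or 1 ≤ j ≤ n + 1 − cd(P). -/

import Mathlib

open scoped BigOperators Pointwise

noncomputable section

/-- Pairing `⟨a, x⟩ = ∑ aⱼ xⱼ` of an integer linear functional with a real point. -/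
def ipair {n : ℕ} (a : Fin n → ℤ) (x : Fin n → ℝ) : ℝ := ∑ j, (a j : ℝ) * x j

/-- An integer vector is primitive if it is nonzero and not a nontrivial integer
multiple of another integer vector. -/
def IsPrimitive {n : ℕ} (a : Fin n → ℤ) : Prop :=
  a ≠ 0 ∧ ∀ (k : ℤ) (b : Fin n → ℤ), a = k • b → IsUnit k

/-- The set of integer (lattice) points of `ℝⁿ`. -/
def IntPts (n : ℕ) : Set (Fin n → ℝ) := Set.range (fun z : Fin n → ℤ => fun j => (z j : ℝ))

/-- The dimension of a subset of `ℝⁿ` (the dimension of its affine hull). -/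
def setDim {n : ℕ} (S : Set (Fin n → ℝ)) : ℕ := Module.finrank ℝ (vectorSpan ℝ S)

/-- An irredundant facet description `P = {x : A x ≥ b}` of an `n`-dimensional
rational polytope: the rows `aᵢ` of `A` are primitive integer vectors, the right hand
sides are rational, `P` is bounded and `n`-dimensional, every inequality defines a facet
(a face of dimension `n-1`), and no inequality is repeated. -/
structure PolyDesc (n m : ℕ) : Type where
  hm : 0 < m
  A : Fin m → Fin n → ℤ
  b : Fin m → ℚ
  prim : ∀ i, IsPrimitive (A i)
  bounded : Bornology.IsBounded {x : Fin n → ℝ | ∀ i, (b i : ℝ) ≤ ipair (A i) x}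
  fulldim : setDim {x : Fin n → ℝ | ∀ i, (b i : ℝ) ≤ ipair (A i) x} = n
  facet_dim : ∀ i, setDim {x : Fin n → ℝ |
      (∀ j, (b j : ℝ) ≤ ipair (A j) x) ∧ ipair (A i) x = (b i : ℝ)} + 1 = n
  irredundant : Function.Injective (fun i => (A i, b i))

namespace PolyDesc

variable {n m : ℕ} (D : PolyDesc n m)

/-- The polytope `P` itself. -/
def pts : Set (Fin n → ℝ) := {x | ∀ i, (D.b i : ℝ) ≤ ipair (D.A i) x}

/-- Lattice distance `d_{Fᵢ}(x) = ⟨aᵢ, x⟩ - bᵢ` from (the hyperplane spanned by)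
the `i`-th facet. -/
def dF (i : Fin m) (x : Fin n → ℝ) : ℝ := ipair (D.A i) x - (D.b i : ℝ)

/-- Lattice distance `d_P(x) = minᵢ d_{Fᵢ}(x)` from the boundary of `P`. -/
def dist (x : Fin n → ℝ) : ℝ :=
  Finset.univ.inf'
    (Finset.univ_nonempty_iff.mpr (Fin.pos_iff_nonempty.mp D.hm))
    (fun i => D.dF i x)

/-- The adjoint polytope `P⁽ˢ⁾ = {x : d_P(x) ≥ s}`. -/
def adj (s : ℝ) : Set (Fin n → ℝ) := {x | s ≤ D.dist x}

/-- The `i`-th facet `Fᵢ` of `P`. -/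
def facet (i : Fin m) : Set (Fin n → ℝ) := {x ∈ D.pts | ipair (D.A i) x = (D.b i : ℝ)}

/-- The set `{s > 0 : P⁽ˢ⁾ ≠ ∅}`, whose supremum is `μ(P)⁻¹`. -/
def qcdInvSet : Set ℝ := {s : ℝ | 0 < s ∧ (D.adj s).Nonempty}

/-- `μ(P)⁻¹ = sup {s > 0 : P⁽ˢ⁾ ≠ ∅}`. -/
def qcdInv : ℝ := sSup D.qcdInvSet

/-- The ℚ-codegree `μ(P) = (sup {s > 0 : P⁽ˢ⁾ ≠ ∅})⁻¹`. -/
def qcd : ℝ := D.qcdInv⁻¹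

/-- The core `core(P) = P^{(1/μ(P))}`. -/
def core : Set (Fin n → ℝ) := D.adj D.qcdInv

/-- The codegree `cd(P) = min {k ∈ ℕ, k ≥ 1 : int(kP) ∩ ℤⁿ ≠ ∅}`. -/
def codeg : ℕ := sInf {k : ℕ | 0 < k ∧
  ∃ z : Fin n → ℤ, (fun j => (z j : ℝ)) ∈ interior ((k : ℝ) • D.pts)}

end PolyDesc

/-- The face of `S` on which the linear functional `u` is maximized. -/
def argFace {n : ℕ} (S : Set (Fin n → ℝ)) (u : Fin n → ℝ) : Set (Fin n → ℝ) :=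
  {x ∈ S | ∀ y ∈ S, ∑ j, u j * y j ≤ ∑ j, u j * x j}

/-- `S` and `T` have the same normal fan: two linear functionals lie in the same
(relatively open) cone of the normal fan of `S`, i.e. are maximized on the same face
of `S`, iff the same holds for `T`. -/
def SameNormalFan {n : ℕ} (S T : Set (Fin n → ℝ)) : Prop :=
  ∀ u v : Fin n → ℝ, (argFace S u = argFace S v ↔ argFace T u = argFace T v)

/-- The normal fan of `S` refines the normal fan of `T`. -/
def RefinesNormalFan {n : ℕ} (S T : Set (Fin n → ℝ)) : Prop :=
  ∀ u v : Fin n → ℝ, argFace S u = argFace S v → argFace T u = argFace T v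

namespace PolyDesc
variable {n m : ℕ} (D : PolyDesc n m)

/-- `{s > 0 : N(P⁽ˢ⁾) = N(P)}`, whose supremum is `τ(P)⁻¹`. -/
def nefInvSet : Set ℝ := {s : ℝ | 0 < s ∧ SameNormalFan (D.adj s) D.pts}

/-- `τ(P)⁻¹ = sup {s > 0 : N(P⁽ˢ⁾) = N(P)}`. -/
def nefInv : ℝ := sSup D.nefInvSet

/-- The nef value `τ(P)`. -/
def nefVal : ℝ := D.nefInv⁻¹

/-- The set of inequalities active at `x`; the normal cone of the minimal face of `P`
containing `x` is generated by `{aᵢ : i ∈ active x}`, and all cones of the normal fan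
of `P` arise in this way. -/
def active (x : Fin n → ℝ) : Set (Fin m) := {i | ipair (D.A i) x = (D.b i : ℝ)}

/-- The normal cone at the vertex `v` is ℚ-Gorenstein of index `r`, witnessed by the
primitive lattice point `u = u_σ` with `⟨aᵢ, u⟩ = r` for all active `i`. -/
def VertexQG (v : Fin n → ℝ) (u : Fin n → ℤ) (r : ℤ) : Prop :=
  IsPrimitive u ∧ 0 < r ∧ ∀ i ∈ D.active v, (∑ j, D.A i j * u j) = r

/-- The normal fan of `P` is ℚ-Gorenstein: every maximal cone (normal cone of a
vertex, i.e. of an extreme point) is ℚ-Gorenstein. -/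
def QGorenstein : Prop := ∀ v ∈ Set.extremePoints ℝ D.pts, ∃ u r, D.VertexQG v u r

end PolyDesc

/-- The point `v(s) = v + (s/r_σ) • u_σ`. -/
def vmove {n : ℕ} (v : Fin n → ℝ) (s : ℝ) (u : Fin n → ℤ) (r : ℤ) : Fin n → ℝ :=
  v + (s / (r : ℝ)) • (fun j => ((u j : ℝ)))

/-- The height of a point `y` in the cone generated by `{aᵢ : i ∈ I}`:
`ht(y) = max {∑ λᵢ : λᵢ ≥ 0, ∑ λᵢ aᵢ = y}`. -/
def coneHeight {n m : ℕ} (D : PolyDesc n m) (I : Set (Fin m)) (y : Fin n → ℝ) : ℝ :=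
  sSup {t : ℝ | ∃ c : Fin m → ℝ, (∀ i, 0 ≤ c i) ∧ (∀ i ∉ I, c i = 0) ∧
    (y = ∑ i, c i • (fun j => ((D.A i j : ℝ)))) ∧ t = ∑ i, c i}

/-- `P` is α-canonical: for every cone `σ` of the normal fan of `P` (the normal cone
of the minimal face containing a point `x ∈ P`, generated by `{aᵢ : i ∈ active x}`),
every nonzero lattice point of `σ` has height at least `α`. -/
def AlphaCanonical {n m : ℕ} (D : PolyDesc n m) (α : ℝ) : Prop :=
  ∀ x ∈ D.pts, ∀ z : Fin n → ℤ, z ≠ 0 →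
    (∃ c : Fin m → ℝ, (∀ i, 0 ≤ c i) ∧ (∀ i ∉ D.active x, c i = 0) ∧
      ((fun j => ((z j : ℝ))) = ∑ i, c i • (fun j => ((D.A i j : ℝ))))) →
    α ≤ coneHeight D (D.active x) (fun j => ((z j : ℝ)))

/-- `P` is a lattice polytope: the convex hull of finitely many integer points. -/
def IsLatticePoly {n : ℕ} (P : Set (Fin n → ℝ)) : Prop :=
  ∃ V : Finset (Fin n → ℤ),
    P = convexHull ℝ ((fun z : Fin n → ℤ => fun j => ((z j : ℝ))) '' (V : Set (Fin n → ℤ)))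

/-- The `i`-th standard basis vector of `ℝᵗ`. -/
def stdBasisVec (t : ℕ) (i : Fin t) : Fin t → ℝ := fun j => if j = i then 1 else 0

/-- The marking vectors of a Cayley sum: `0, e₁, …, e_t ∈ ℝᵗ`. -/
def cayleyVec (t : ℕ) : Fin (t + 1) → (Fin t → ℝ) :=
  fun j => if h : (j : ℕ) = 0 then 0 else stdBasisVec t ⟨(j : ℕ) - 1, by have := j.isLt; omega⟩

/-- The Cayley sum `Q₀ * ⋯ * Q_t = conv((Q₀ × {0}) ∪ (Q₁ × {e₁}) ∪ ⋯ ∪ (Q_t × {e_t}))`. -/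
def cayleySum {k t : ℕ} (Q : Fin (t + 1) → Set (Fin k → ℝ)) :
    Set ((Fin k → ℝ) × (Fin t → ℝ)) :=
  convexHull ℝ (⋃ j, (Q j) ×ˢ ({cayleyVec t j} : Set (Fin t → ℝ)))

/-- `P ⊆ ℝⁿ` is a Cayley polytope `P₀ * ⋯ * P_t` of length `t+1` of lattice polytopes
`Pⱼ ⊆ ℝᵏ` with `k + t = n`: some affine lattice isomorphism `ℤⁿ ≅ ℤᵏ × ℤᵗ`
identifies `P` with such a Cayley sum. -/
def IsCayley {n : ℕ} (P : Set (Fin n → ℝ)) (k t : ℕ) : Prop :=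
  k + t = n ∧
  ∃ Q : Fin (t + 1) → Finset (Fin k → ℤ), (∀ j, (Q j).Nonempty) ∧
  ∃ f : (Fin n → ℝ) ≃ᵃ[ℝ] (Fin k → ℝ) × (Fin t → ℝ),
    f '' IntPts n = (IntPts k) ×ˢ (IntPts t) ∧
    f '' P = cayleySum (fun j =>
      convexHull ℝ ((fun z : Fin k → ℤ => fun i => ((z i : ℝ))) '' (Q j : Set (Fin k → ℤ))))

/-- The unimodular simplex `Δₙ = conv(0, e₁, …, eₙ)`. -/
def unimodSimplex (n : ℕ) : Set (Fin n → ℝ) :=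
  convexHull ℝ (insert (0 : Fin n → ℝ) (Set.range (stdBasisVec n)))

/-- Two subsets of `ℝⁿ` are unimodularly equivalent: an affine lattice automorphism
maps one onto the other. -/
def UnimodEquiv {n : ℕ} (P P' : Set (Fin n → ℝ)) : Prop :=
  ∃ f : (Fin n → ℝ) ≃ᵃ[ℝ] (Fin n → ℝ), f '' IntPts n = IntPts n ∧ f '' P = P'

/-- The codegree `cd(P) = min {k ∈ ℕ, k ≥ 1 : int(kP) ∩ ℤⁿ ≠ ∅}` of a polytope given
as a set. -/
def codegS {n : ℕ} (P : Set (Fin n → ℝ)) : ℕ :=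
  sInf {k : ℕ | 0 < k ∧ ∃ z : Fin n → ℤ, (fun j => (z j : ℝ)) ∈ interior ((k : ℝ) • P)}

/-- `P` has lattice width one: some nonzero integer linear functional has minimum `c`
and maximum `c + 1` on `P`. -/
def HasLatticeWidthOne {n : ℕ} (P : Set (Fin n → ℝ)) : Prop :=
  ∃ u : Fin n → ℤ, u ≠ 0 ∧ ∃ c : ℤ,
    (∀ x ∈ P, (c : ℝ) ≤ ipair u x ∧ ipair u x ≤ (c : ℝ) + 1) ∧
    (∃ x ∈ P, ipair u x = (c : ℝ)) ∧ (∃ x ∈ P, ipair u x = (c : ℝ) + 1)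

/-- `P` is a lattice pyramid: for some primitive `u`, `P` is the convex hull of a base
lying in the lattice hyperplane `{⟨u, ·⟩ = c}` and an apex at lattice distance one from
it (this is equivalent to being unimodularly equivalent to
`conv((Q × {0}) ∪ {(0, …, 0, 1)})` for an `(n-1)`-dimensional lattice polytope `Q`). -/
def IsLatticePyramid {n : ℕ} (P : Set (Fin n → ℝ)) : Prop :=
  ∃ u : Fin n → ℤ, IsPrimitive u ∧ ∃ c : ℤ, ∃ apex ∈ P,
    ipair u apex = (c : ℝ) + 1 ∧
    P = convexHull ℝ ({x ∈ P | ipair u x = (c : ℝ)} ∪ {apex})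

/-- `F` is a facet of `S`: an exposed face of dimension `dim S - 1`. -/
def IsFacetOf {n : ℕ} (F S : Set (Fin n → ℝ)) : Prop :=
  IsExposed ℝ S F ∧ F.Nonempty ∧ setDim F + 1 = setDim S


private lemma exists_fin_rep {α : Type*} [AddCommMonoid α] (B : Finset α) (m : α → ℕ) :
    ∃ (g : ℕ) (v : Fin g → α), (∀ i, v i ∈ B) ∧ (∑ i, v i) = ∑ y ∈ B, m y • y ∧
      g = ∑ y ∈ B, m y := by
  classical
  induction B using Finset.induction_on with
  | empty => exact ⟨0, fun i => i.elim0, fun i => i.elim0, by simp, by simp⟩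
  | @insert a s ha ih =>
    obtain ⟨g, v, hv, hsum, hg⟩ := ih
    refine ⟨m a + g, Fin.append (fun _ => a) v, ?_, ?_, ?_⟩
    · intro i
      refine Fin.addCases (fun i => ?_) (fun i => ?_) i
      · rw [Fin.append_left]; exact Finset.mem_insert_self a s
      · rw [Fin.append_right]; exact Finset.mem_insert_of_mem (hv i)
    · rw [Fin.sum_univ_add]
      simp only [Fin.append_left, Fin.append_right]
      rw [Finset.sum_insert ha, ← hsum, Finset.sum_const, Finset.card_univ, Fintype.card_fin]
    · rw [Finset.sum_insert ha, hg]

/-- Let `P ⊆ ℝⁿ` be an `n`-dimensional lattice polytope and let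
`z ∈ pos(P × {1}) ∩ ℤ^{n+1}`. Then there are (not necessarily distinct) vertices
`v₁, …, v_g` of `P` (possibly `g = 0`), an integer `j ≥ 0` and a lattice point
`p ∈ (jP) ∩ ℤⁿ` with `z = (v₁, 1) + ⋯ + (v_g, 1) + (p, j)`, where either
`(p, j) = (0, 0)` or `1 ≤ j ≤ n + 1 - cd(P)`. -/
theorem statement14 {n : ℕ} (V : Finset (Fin n → ℤ)) (P : Set (Fin n → ℝ))
    (hP : P = convexHull ℝ
      ((fun z : Fin n → ℤ => fun j => ((z j : ℝ))) '' (V : Set (Fin n → ℤ))))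
    (hdim : setDim P = n)
    (z : (Fin n → ℝ) × ℝ)
    (hz_int : (∃ zi : Fin n → ℤ, z.1 = fun j => ((zi j : ℝ))) ∧ (∃ k : ℤ, z.2 = (k : ℝ)))
    (hz_cone : ∃ c : ℝ, 0 ≤ c ∧ ∃ p ∈ P, z = c • (p, (1 : ℝ))) :
    ∃ (g : ℕ) (v : Fin g → (Fin n → ℝ)) (j : ℕ) (p : Fin n → ℤ),
      (∀ i, v i ∈ Set.extremePoints ℝ P) ∧
      (fun l => ((p l : ℝ))) ∈ (j : ℝ) • P ∧
      z = ((∑ i, v i) + fun l => ((p l : ℝ)), (g : ℝ) + (j : ℝ)) ∧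
      ((p = 0 ∧ j = 0) ∨ (1 ≤ j ∧ (j : ℤ) ≤ (n : ℤ) + 1 - (codegS P : ℤ))) := by
  classical
  obtain ⟨⟨zi, hzi⟩, ⟨kz, hkz⟩⟩ := hz_int
  obtain ⟨c, hc0, p0, hp0, hzc⟩ := hz_cone
  have hz1 : z.1 = c • p0 := by rw [hzc]; rfl
  have hz2 : z.2 = c := by rw [hzc]; simp
  have hPne : P.Nonempty := ⟨p0, hp0⟩
  have hVfin : ((fun q : Fin n → ℤ => fun j => ((q j : ℝ))) '' (V : Set (Fin n → ℤ))).Finite :=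
    V.finite_toSet.image _
  have hPconv : Convex ℝ P := hP ▸ convex_convexHull ℝ _
  have hPcomp : IsCompact P := hP ▸ hVfin.isCompact_convexHull ℝ
  set EP := Set.extremePoints ℝ P with hEPdef
  have hEV : EP ⊆ (fun q : Fin n → ℤ => fun j => ((q j : ℝ))) '' (V : Set (Fin n → ℤ)) := by
    rw [hEPdef, hP]; exact extremePoints_convexHull_subset
  have hEfin : EP.Finite := hVfin.subset hEV
  have hEP_P : EP ⊆ P := extremePoints_subset
  have hPE : P = convexHull ℝ EP := by
    have h := closure_convexHull_extremePoints hPcomp hPconv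
    rw [(hEfin.isClosed_convexHull ℝ).closure_eq] at h
    exact h.symm
  have iRep : ∀ y ∈ EP, ∃ q : Fin n → ℤ, y = fun l => ((q l : ℝ)) := by
    intro y hy
    obtain ⟨q, _, hq⟩ := hEV hy
    exact ⟨q, hq.symm⟩
  set ψ : (Fin n → ℝ) → (Fin n → ℤ) :=
    fun y => if h : y ∈ EP then (iRep y h).choose else 0 with hψdef
  have hψ : ∀ y ∈ EP, ∀ l, ((ψ y l : ℝ)) = y l := by
    intro y hy l
    simp only [hψdef, dif_pos hy]
    exact (congrFun (iRep y hy).choose_spec l).symm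
  rcases eq_or_lt_of_le hc0 with hc0' | hcpos
  · refine ⟨0, fun i => i.elim0, 0, 0, fun i => i.elim0, ?_, ?_, Or.inl ⟨rfl, rfl⟩⟩
    · have h00 : (fun l => (((0 : Fin n → ℤ) l : ℝ))) = (0 : Fin n → ℝ) := by
        funext l; simp
      rw [h00, Nat.cast_zero, Set.zero_smul_set hPne]
      simp
    · rw [Prod.ext_iff]
      constructor
      · rw [hz1, ← hc0', zero_smul]; ext l; simp
      · rw [hz2, ← hc0']; norm_num
  -- main case: c = k ≥ 1
  have hck : c = (kz : ℝ) := by rw [← hz2, hkz]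
  have hkzpos : 0 < kz := by
    have : (0:ℝ) < (kz : ℝ) := hck ▸ hcpos
    exact_mod_cast this
  obtain ⟨k, hkk⟩ : ∃ k : ℕ, (k : ℤ) = kz := ⟨kz.toNat, Int.toNat_of_nonneg hkzpos.le⟩
  have hk1 : 1 ≤ k := by omega
  have hkc : (k : ℝ) = c := by
    rw [hck, ← hkk]; norm_cast
  -- Caratheodory
  have hp0E : p0 ∈ convexHull ℝ EP := hPE ▸ hp0
  rw [convexHull_eq_union] at hp0E
  simp only [Set.mem_iUnion] at hp0E
  obtain ⟨T, hTE, hTind, hp0T⟩ := hp0E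
  rw [Finset.convexHull_eq] at hp0T
  obtain ⟨w, hw0, hw1, hwc⟩ := hp0T
  have hp0sum : ∑ y ∈ T, w y • y = p0 := by
    rw [← hwc, Finset.centerMass_eq_of_sum_1 _ _ hw1]
    rfl
  have hTne : T.Nonempty := Finset.nonempty_of_sum_ne_zero (by rw [hw1]; exact one_ne_zero)
  obtain ⟨a, haT⟩ := hTne
  have haE : a ∈ EP := hTE haT
  -- full dimensionality
  have hPspan : vectorSpan ℝ P = ⊤ := by
    apply Submodule.eq_top_of_finrank_eq
    rw [Module.finrank_fin_fun ℝ]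
    exact hdim
  have hEspan : vectorSpan ℝ EP = ⊤ := by
    have haff : affineSpan ℝ EP = affineSpan ℝ P := by
      conv_rhs => rw [hPE]
      rw [affineSpan_convexHull]
    rw [← direction_affineSpan, haff, direction_affineSpan, hPspan]
  set t0 : Set (Fin n → ℝ) := (fun p => p -ᵥ a) '' EP with ht0def
  have ht0span : Submodule.span ℝ t0 = ⊤ := by
    rw [ht0def, ← vectorSpan_eq_span_vsub_set_right ℝ haE, hEspan]
  have hs0lin : LinearIndependent ℝ
      (Subtype.val : ↥((fun p => p -ᵥ a) '' ((↑T : Set (Fin n → ℝ)) \ {a})) → (Fin n → ℝ)) := by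
    rw [← affineIndependent_set_iff_linearIndependent_vsub ℝ
      (show a ∈ (↑T : Set (Fin n → ℝ)) from haT)]
    exact hTind
  obtain ⟨bs, hbt0, hs0b, ht0sub, hblin⟩ :=
    exists_linearIndepOn_id_extension hs0lin
      (Set.image_mono (fun x hx => hTE hx.1))
  replace hblin : LinearIndependent ℝ (Subtype.val : bs → (Fin n → ℝ)) := hblin
  have hbspan : Submodule.span ℝ bs = ⊤ := by
    have h1 : Submodule.span ℝ t0 ≤ Submodule.span ℝ bs := Submodule.span_le.mpr ht0sub
    rw [ht0span] at h1; exact top_le_iff.mp h1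
  have h0b : (0 : Fin n → ℝ) ∉ bs := fun h0 => hblin.ne_zero ⟨0, h0⟩ rfl
  set S' : Set (Fin n → ℝ) := insert a ((fun v => v + a) '' bs) with hS'def
  have haimg : a ∉ (fun v => v + a) '' bs := by
    rintro ⟨v, hv, hva⟩
    exact h0b (by rwa [add_eq_right.mp hva] at hv)
  have hS'E : S' ⊆ EP := by
    rintro x (rfl | ⟨v, hv, rfl⟩)
    · exact haE
    · obtain ⟨e, he, hev⟩ := hbt0 hv
      have hev' : e - a = v := by simpa [vsub_eq_sub] using hev
      show v + a ∈ EP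
      rw [← hev', sub_add_cancel]; exact he
  have hTS' : (↑T : Set (Fin n → ℝ)) ⊆ S' := by
    intro x hx
    by_cases hxa : x = a
    · exact hxa ▸ Set.mem_insert _ _
    · refine Set.mem_insert_of_mem _ ⟨x -ᵥ a, hs0b ⟨x, ⟨hx, hxa⟩, rfl⟩, ?_⟩
      show x -ᵥ a + a = x
      rw [vsub_eq_sub, sub_add_cancel]
  have hS'diff : (fun p => p -ᵥ a) '' (S' \ {a}) = bs := by
    ext v
    constructor
    · rintro ⟨x, ⟨hxS, hxa⟩, rfl⟩
      rcases hxS with rfl | ⟨u, hu, rfl⟩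
      · exact absurd rfl hxa
      · simpa [vsub_eq_sub] using hu
    · intro hv
      refine ⟨v + a, ⟨Set.mem_insert_of_mem _ ⟨v, hv, rfl⟩, fun h => ?_⟩, by
        show v + a -ᵥ a = v
        rw [vsub_eq_sub, add_sub_cancel_right]⟩
      exact h0b (by rwa [add_eq_right.mp h] at hv)
  have hS'ind : AffineIndependent ℝ (Subtype.val : ↥S' → (Fin n → ℝ)) := by
    rw [affineIndependent_set_iff_linearIndependent_vsub ℝ (Set.mem_insert a _), hS'diff]
    exact hblin
  have hS'vspan : vectorSpan ℝ S' = ⊤ := by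
    rw [vectorSpan_eq_span_vsub_set_right ℝ (Set.mem_insert a _)]
    apply top_le_iff.mp
    rw [← hbspan]
    apply Submodule.span_le.mpr
    intro v hv
    apply Submodule.subset_span
    exact ⟨v + a, Set.mem_insert_of_mem _ ⟨v, hv, rfl⟩, by
      show v + a -ᵥ a = v
      rw [vsub_eq_sub, add_sub_cancel_right]⟩
  have hS'fin : S'.Finite := hEfin.subset hS'E
  set B : Finset (Fin n → ℝ) := hS'fin.toFinset with hBdef
  have hBS' : (↑B : Set (Fin n → ℝ)) = S' := hS'fin.coe_toFinset
  have hBE : ∀ y ∈ B, y ∈ EP := fun y hy => hS'E (hS'fin.mem_toFinset.mp hy)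
  have hBsubP : (↑B : Set (Fin n → ℝ)) ⊆ P := fun y hy => hEP_P (hBE y hy)
  have hBind : AffineIndependent ℝ (Subtype.val : ↥(↑B : Set (Fin n → ℝ)) → (Fin n → ℝ)) := by
    rw [hBS']; exact hS'ind
  have hBaspan : affineSpan ℝ (↑B : Set (Fin n → ℝ)) = ⊤ := by
    rw [hBS']
    rw [AffineSubspace.affineSpan_eq_top_iff_vectorSpan_eq_top_of_nonempty ℝ (Fin n → ℝ) (Fin n → ℝ)
      ⟨a, Set.mem_insert a _⟩]
    exact hS'vspan
  set bas : AffineBasis ↥(↑B : Set (Fin n → ℝ)) ℝ (Fin n → ℝ) :=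
    ⟨Subtype.val, hBind, by rwa [Subtype.range_coe]⟩ with hbasdef
  have hcard : Fintype.card ↥(↑B : Set (Fin n → ℝ)) = n + 1 := by
    have h := hBind.affineSpan_eq_top_iff_card_eq_finrank_add_one.mp
      (by rwa [Subtype.range_coe])
    rwa [Module.finrank_fin_fun] at h
  have hBcard : B.card = n + 1 := by
    rw [← hcard]; exact (Fintype.card_coe B).symm
  have hTB : T ⊆ B := fun x hx => hS'fin.mem_toFinset.mpr (hTS' hx)
  have haB : a ∈ B := hTB haT
  -- weights
  set W : (Fin n → ℝ) → ℝ := fun y => if y ∈ T then w y else 0 with hWdef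
  have hW0 : ∀ y, 0 ≤ W y := by
    intro y
    by_cases h : y ∈ T
    · simp only [hWdef, if_pos h]; exact hw0 y h
    · simp only [hWdef, if_neg h]; exact le_rfl
  have hWsum : ∑ y ∈ B, W y = 1 := by
    rw [← Finset.sum_subset hTB (fun x _ hx => by simp only [hWdef, if_neg hx]), ← hw1]
    exact Finset.sum_congr rfl fun x hx => by simp only [hWdef, if_pos hx]
  have hWvsum : ∑ y ∈ B, W y • y = p0 := by
    rw [← Finset.sum_subset hTB
      (fun x _ hx => by simp only [hWdef, if_neg hx, zero_smul]), ← hp0sum]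
    exact Finset.sum_congr rfl fun x hx => by simp only [hWdef, if_pos hx]
  set lam : (Fin n → ℝ) → ℝ := fun y => (k : ℝ) * W y with hlamdef
  have hlam0 : ∀ y, 0 ≤ lam y := fun y => mul_nonneg (Nat.cast_nonneg k) (hW0 y)
  set mm : (Fin n → ℝ) → ℕ := fun y => (⌊lam y⌋).toNat with hmmdef
  have hmm : ∀ y, ((mm y : ℝ)) = ((⌊lam y⌋ : ℤ) : ℝ) := by
    intro y
    simp only [hmmdef]
    norm_cast
    exact Int.toNat_of_nonneg (Int.floor_nonneg.mpr (hlam0 y))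
  set fr : (Fin n → ℝ) → ℝ := fun y => lam y - mm y with hfrdef
  have hfr0 : ∀ y, 0 ≤ fr y := by
    intro y
    simp only [hfrdef, hmm y, sub_nonneg]
    exact Int.floor_le (lam y)
  have hfr1 : ∀ y, fr y < 1 := by
    intro y
    simp only [hfrdef, hmm y]
    have := Int.lt_floor_add_one (lam y)
    linarith
  have hlamsum : ∑ y ∈ B, lam y = (k : ℝ) := by
    simp only [hlamdef, ← Finset.mul_sum, hWsum, mul_one]
  have hlamvsum : ∑ y ∈ B, lam y • y = z.1 := by
    rw [hz1, ← hkc, ← hWvsum, Finset.smul_sum]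
    exact Finset.sum_congr rfl fun y _ => (smul_smul _ _ _).symm
  have hmmle : ∀ y, (mm y : ℝ) ≤ lam y := by
    intro y; rw [hmm y]; exact Int.floor_le (lam y)
  have hmle : ∑ y ∈ B, mm y ≤ k := by
    have h : ((∑ y ∈ B, mm y : ℕ) : ℝ) ≤ (k : ℝ) := by
      push_cast
      rw [← hlamsum]
      exact Finset.sum_le_sum fun y _ => hmmle y
    exact_mod_cast h
  set j : ℕ := k - ∑ y ∈ B, mm y with hjdef
  have hkgj : k = (∑ y ∈ B, mm y) + j := by omega
  have hjf : (j : ℝ) = ∑ y ∈ B, fr y := by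
    have : (j : ℝ) = (k : ℝ) - ((∑ y ∈ B, mm y : ℕ) : ℝ) := by
      rw [hjdef]
      push_cast [Nat.cast_sub hmle]
      ring
    rw [this]
    simp only [hfrdef]
    rw [Finset.sum_sub_distrib, hlamsum]
    push_cast
    ring
  have hdecomp : z.1 = (∑ y ∈ B, (mm y : ℝ) • y) + ∑ y ∈ B, fr y • y := by
    rw [← hlamvsum, ← Finset.sum_add_distrib]
    refine Finset.sum_congr rfl fun y _ => ?_
    rw [← add_smul]
    simp only [hfrdef]
    ring_nf
  obtain ⟨g, v, hvB, hvsum, hg⟩ := exists_fin_rep B mm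
  have hvsumR : ∑ y ∈ B, (mm y : ℝ) • y = ∑ i, v i := by
    rw [hvsum]
    exact Finset.sum_congr rfl fun y _ => (Nat.cast_smul_eq_nsmul ℝ _ _)
  -- integer vector p
  set p : Fin n → ℤ := fun l => zi l - ∑ y ∈ B, (mm y : ℤ) * ψ y l with hpdef
  have hpc : (fun l => ((p l : ℝ))) = ∑ y ∈ B, fr y • y := by
    funext l
    have hdl := congrFun hdecomp l
    have hz1l : z.1 l = (zi l : ℝ) := by rw [hzi]
    simp only [Finset.sum_apply, Pi.add_apply, Pi.smul_apply, smul_eq_mul] at hdl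
    have hsum_mm : ((∑ y ∈ B, (mm y : ℤ) * ψ y l : ℤ) : ℝ) = ∑ y ∈ B, (mm y : ℝ) * y l := by
      push_cast
      exact Finset.sum_congr rfl fun y hy => by rw [hψ y (hBE y hy) l]
    simp only [hpdef]
    push_cast [hsum_mm]
    simp only [Finset.sum_apply, Pi.smul_apply, smul_eq_mul]
    rw [hsum_mm] at *
    linarith [hdl, hz1l]
  rcases Nat.eq_zero_or_pos j with hj0 | hj1
  · -- j = 0 : all fractional parts vanish
    have hfz : ∑ y ∈ B, fr y • y = 0 := by
      have h0 : ∑ y ∈ B, fr y = 0 := by rw [← hjf, hj0]; norm_num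
      refine Finset.sum_eq_zero fun y hy => ?_
      rw [(Finset.sum_eq_zero_iff_of_nonneg (fun y _ => hfr0 y)).mp h0 y hy, zero_smul]
    refine ⟨g, v, 0, 0, fun i => hBE _ (hvB i), ?_, ?_, Or.inl ⟨rfl, rfl⟩⟩
    · have h00 : (fun l => (((0 : Fin n → ℤ) l : ℝ))) = (0 : Fin n → ℝ) := by funext l; simp
      rw [h00, Nat.cast_zero, Set.zero_smul_set hPne]
      simp
    · rw [Prod.ext_iff]
      constructor
      · show z.1 = _
        rw [hdecomp, hfz, add_zero, hvsumR]
        have h00 : (fun l => (((0 : Fin n → ℤ) l : ℝ))) = (0 : Fin n → ℝ) := by funext l; simp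
        rw [h00, add_zero]
      · show z.2 = _
        rw [hz2, ← hkc]
        have : k = g := by omega
        rw [this]
        norm_num
  · -- j ≥ 1
    have hjR : (0:ℝ) < (j : ℝ) := by exact_mod_cast hj1
    have hjn : j ≤ n := by
      have hlt : (j : ℝ) < (B.card : ℝ) := by
        rw [hjf]
        calc ∑ y ∈ B, fr y < ∑ y ∈ B, 1 :=
              Finset.sum_lt_sum_of_nonempty ⟨a, haB⟩ (fun y _ => hfr1 y)
          _ = (B.card : ℝ) := by rw [Finset.sum_const, nsmul_eq_mul, mul_one]
      rw [hBcard] at hlt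
      have : j < n + 1 := by exact_mod_cast hlt
      omega
    -- p ∈ j • P
    have hcm : B.centerMass fr id ∈ P := by
      apply convexHull_min hBsubP hPconv
      exact B.centerMass_mem_convexHull (fun y _ => hfr0 y)
        (by rw [← hjf]; exact hjR) (fun y hy => Finset.mem_coe.mpr hy)
    have hcmass : (∑ y ∈ B, fr y • y) = (j : ℝ) • B.centerMass fr id := by
      rw [Finset.centerMass, ← hjf, smul_smul, mul_inv_cancel₀ (ne_of_gt hjR), one_smul]
      simp [id]
    have hmemjP : (∑ y ∈ B, fr y • y) ∈ (j : ℝ) • P := by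
      rw [hcmass]; exact Set.smul_mem_smul_set hcm
    -- codegree bound
    set N : ℕ := n + 1 - j with hNdef
    have hN1 : 1 ≤ N := by omega
    have hNpos : (0:ℝ) < (N : ℝ) := by exact_mod_cast hN1
    have hNR : (N : ℝ) = (n : ℝ) + 1 - (j : ℝ) := by
      rw [hNdef]
      push_cast [Nat.cast_sub (by omega : j ≤ n + 1)]
      ring
    set qhat : Fin n → ℝ := ∑ y ∈ B, (1 - fr y) • y with hqdef
    have hqsumw : ∑ y ∈ B, (1 - fr y) = (N : ℝ) := by
      rw [Finset.sum_sub_distrib, ← hjf, Finset.sum_const, nsmul_eq_mul, mul_one, hBcard, hNR]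
      push_cast
      ring
    set w' : ↥(↑B : Set (Fin n → ℝ)) → ℝ := fun i => (1 - fr i.val) / (N : ℝ) with hw'def
    have hw'sum : ∑ i, w' i = 1 := by
      have h1 : ∑ i, w' i = ∑ y ∈ B, (1 - fr y) / (N : ℝ) :=
        Finset.sum_coe_sort B (fun y => (1 - fr y) / (N : ℝ))
      rw [h1, ← Finset.sum_div, hqsumw, div_self (ne_of_gt hNpos)]
    have hxdef : (N:ℝ)⁻¹ • qhat = Finset.univ.affineCombination ℝ bas w' := by
      rw [Finset.affineCombination_eq_linear_combination _ _ _ hw'sum]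
      rw [hqdef, Finset.smul_sum]
      rw [← Finset.sum_coe_sort B (fun y => (N:ℝ)⁻¹ • ((1 - fr y) • y))]
      refine Finset.sum_congr rfl fun i _ => ?_
      rw [smul_smul]
      have hbe : bas i = i.val := rfl
      rw [hbe, hw'def]
      congr 1
      field_simp
    have hcoord : ∀ i, 0 < bas.coord i ((N:ℝ)⁻¹ • qhat) := by
      intro i
      rw [hxdef, AffineBasis.coord_apply_combination_of_mem bas (Finset.mem_univ i) hw'sum]
      exact div_pos (by linarith [hfr1 i.val]) hNpos
    have hint : (N:ℝ)⁻¹ • qhat ∈ interior P := by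
      have h1 : (N:ℝ)⁻¹ • qhat ∈ interior (convexHull ℝ (Set.range bas)) := by
        rw [AffineBasis.interior_convexHull]; exact hcoord
      have h2 : convexHull ℝ (Set.range bas) ⊆ P := by
        have hrange : Set.range bas = (↑B : Set (Fin n → ℝ)) := Subtype.range_coe
        rw [hrange]
        exact convexHull_min hBsubP hPconv
      exact interior_mono h2 h1
    have hqint : qhat ∈ interior ((N:ℝ) • P) := by
      rw [interior_smul₀ (ne_of_gt hNpos)]
      have hq' : qhat = (N:ℝ) • ((N:ℝ)⁻¹ • qhat) := (smul_inv_smul₀ (ne_of_gt hNpos) _).symm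
      rw [hq']
      exact Set.smul_mem_smul_set hint
    set qz : Fin n → ℤ := fun l => (∑ y ∈ B, ψ y l) - p l with hqzdef
    have hqzc : (fun l => ((qz l : ℝ))) = qhat := by
      funext l
      have hpl := congrFun hpc l
      simp only [Finset.sum_apply, Pi.smul_apply, smul_eq_mul] at hpl
      have hsy : ((∑ y ∈ B, ψ y l : ℤ) : ℝ) = ∑ y ∈ B, y l := by
        push_cast
        exact Finset.sum_congr rfl fun y hy => hψ y (hBE y hy) l
      have hcast : ((qz l : ℤ) : ℝ) = ((∑ y ∈ B, ψ y l : ℤ) : ℝ) - ((p l : ℤ) : ℝ) := by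
        simp only [hqzdef]; push_cast; ring
      show ((qz l : ℤ) : ℝ) = qhat l
      rw [hcast, hsy, hpl]
      simp only [hqdef, Finset.sum_apply, Pi.smul_apply, smul_eq_mul, sub_mul, one_mul,
        Finset.sum_sub_distrib]
    have hcd : codegS P ≤ N := by
      apply Nat.sInf_le
      refine ⟨by omega, qz, ?_⟩
      rw [hqzc]
      exact hqint
    refine ⟨g, v, j, p, fun i => hBE _ (hvB i), ?_, ?_, Or.inr ⟨hj1, by omega⟩⟩
    · rw [hpc]; exact hmemjP
    · rw [Prod.ext_iff]
      constructor
      · show z.1 = _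
        rw [hpc, hdecomp, hvsumR]
      · show z.2 = _
        rw [hz2, ← hkc]
        have : k = g + j := by omega
        rw [this]
        push_cast
        ring


end
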